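/- Let κ ∈ (−1, 1), λ1 ∈ [−1, 1], and λ2, λ3 ∈ ℝ; set D := κ²λ1² − 1 (note D < 0), s := κ·(λ1² − 1)/D, and τ := λ1·(κ² − 1)/D. Then the 4×4 complex matrix M := (1/2)(I⊗I) + (s/2)(σ1⊗I) + (τ/2)(σ1⊗σ1) + (λ2/2)(σ2⊗σ2) + (λ3/2)(σ3⊗σ3) is positive semidefinite if and only if both (1 − τ)² ≥ s² + (λ2 + λ3)² and (1 + τ)² ≥ s² + (λ2 − λ3)² hold. -/

import Mathlib

set_option maxHeartbeats 1000000

open Matrix Kronecker ComplexOrder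

noncomputable def σ1 : Matrix (Fin 2) (Fin 2) ℂ := !![0, 1; 1, 0]
noncomputable def σ2 : Matrix (Fin 2) (Fin 2) ℂ := !![0, -Complex.I; Complex.I, 0]
noncomputable def σ3 : Matrix (Fin 2) (Fin 2) ℂ := !![1, 0; 0, -1]

lemma stmt9_key (A B s u v r : ℝ) (hA : 0 ≤ A) (hB : 0 ≤ B) (hs : s^2 ≤ A*B)
    (hu : 0 ≤ u) (hv : 0 ≤ v) (hr : r^2 ≤ u*v) : 0 ≤ A*u + B*v + 2*s*r := by
  nlinarith [mul_nonneg hA hu, mul_nonneg hB hv, sq_nonneg (A*u - B*v),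
    mul_nonneg (sub_nonneg.mpr hs) (mul_nonneg hu hv),
    mul_le_mul_of_nonneg_left hr (sq_nonneg s)]

lemma stmt9_cauchy (p q r t : ℝ) : (p*r+q*t)^2 ≤ (p^2+q^2)*(r^2+t^2) := by
  nlinarith [sq_nonneg (p*t-q*r)]

lemma stmt9_abs (x t : ℝ) (hx : 0 ≤ x) (h : t^2 ≤ x^2) : 0 ≤ x - t := by nlinarith

lemma stmt9_nonneg_mul (x y : ℝ) (hy : 0 < y) (h : 0 ≤ x * y) : 0 ≤ x :=
  le_of_not_gt fun hx => absurd h (not_le.2 (mul_neg_of_neg_of_pos hx hy))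

/-- reverse-direction Choi matrix of a Pauli channel, generic case |κ| < 1. -/
theorem stmt9 (κ lam1 lam2 lam3 D s τ : ℝ) (hκ : κ ∈ Set.Ioo (-1 : ℝ) 1)
    (hlam1 : lam1 ∈ Set.Icc (-1 : ℝ) 1)
    (hD : D = κ ^ 2 * lam1 ^ 2 - 1)
    (hs : s = κ * (lam1 ^ 2 - 1) / D)
    (hτ : τ = lam1 * (κ ^ 2 - 1) / D) :
    (((1 : ℝ) / 2 : ℝ) • (((1 : Matrix (Fin 2) (Fin 2) ℂ) ⊗ₖ (1 : Matrix (Fin 2) (Fin 2) ℂ)))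
        + ((s / 2 : ℝ) : ℂ) • (σ1 ⊗ₖ (1 : Matrix (Fin 2) (Fin 2) ℂ))
        + ((τ / 2 : ℝ) : ℂ) • (σ1 ⊗ₖ σ1)
        + ((lam2 / 2 : ℝ) : ℂ) • (σ2 ⊗ₖ σ2)
        + ((lam3 / 2 : ℝ) : ℂ) • (σ3 ⊗ₖ σ3)).PosSemidef
    ↔ (s ^ 2 + (lam2 + lam3) ^ 2 ≤ (1 - τ) ^ 2 ∧
        s ^ 2 + (lam2 - lam3) ^ 2 ≤ (1 + τ) ^ 2) := by
  obtain ⟨hκ1, hκ2⟩ := hκ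
  obtain ⟨hl1, hl2⟩ := hlam1
  set M : Matrix (Fin 2 × Fin 2) (Fin 2 × Fin 2) ℂ :=
      (((1 : ℝ) / 2 : ℝ) • (((1 : Matrix (Fin 2) (Fin 2) ℂ) ⊗ₖ (1 : Matrix (Fin 2) (Fin 2) ℂ)))
        + ((s / 2 : ℝ) : ℂ) • (σ1 ⊗ₖ (1 : Matrix (Fin 2) (Fin 2) ℂ))
        + ((τ / 2 : ℝ) : ℂ) • (σ1 ⊗ₖ σ1)
        + ((lam2 / 2 : ℝ) : ℂ) • (σ2 ⊗ₖ σ2)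
        + ((lam3 / 2 : ℝ) : ℂ) • (σ3 ⊗ₖ σ3)) with hM
  -- bounds on τ
  have hk2 : κ^2 < 1 := by nlinarith
  have hl2' : lam1^2 ≤ 1 := by nlinarith
  have hD0 : D < 0 := by
    nlinarith [sq_nonneg κ, sq_nonneg lam1, mul_le_mul_of_nonneg_left hl2' (sq_nonneg κ)]
  have hτD : τ * D = lam1 * (κ^2 - 1) := by rw [hτ]; exact div_mul_cancel₀ _ (ne_of_lt hD0)
  have h1a : 0 ≤ (1 - lam1) * (1 + κ^2*lam1) := by nlinarith
  have h1b : 0 ≤ (1 + lam1) * (1 - κ^2*lam1) := by nlinarith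
  have e1 : (1-τ)*(-D) = (1 - lam1) * (1 + κ^2*lam1) := by linear_combination hτD - hD
  have e2 : (1+τ)*(-D) = (1 + lam1) * (1 - κ^2*lam1) := by linear_combination -hτD - hD
  have hτle : τ ≤ 1 := by
    have := stmt9_nonneg_mul (1-τ) (-D) (by linarith) (by rw [e1]; exact h1a)
    linarith
  have hτge : -1 ≤ τ := by
    have := stmt9_nonneg_mul (1+τ) (-D) (by linarith) (by rw [e2]; exact h1b)
    linarith
  constructor
  · -- PSD → inequalities
    intro hPSD
    have hq1 : ∀ x : ℝ, 0 ≤ (1 - τ + lam2 + lam3) * (x*x) + (-(2*s))*x + (1 - τ - lam2 - lam3) := by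
      intro x
      have h := hPSD.re_dotProduct_nonneg (fun p => (!![(x:ℂ), 1; -1, -x] p.1 p.2 : ℂ))
      have e : (RCLike.re (star (fun p => (!![(x:ℂ), 1; -1, -x] p.1 p.2 : ℂ)) ⬝ᵥ
          M *ᵥ (fun p => (!![(x:ℂ), 1; -1, -x] p.1 p.2 : ℂ))) : ℝ)
          = (1 - τ + lam2 + lam3) * (x*x) + (-(2*s))*x + (1 - τ - lam2 - lam3) := by
        simp [hM, Matrix.mulVec, dotProduct, Fintype.sum_prod_type, Fin.sum_univ_two,
          σ1, σ2, σ3, Matrix.one_apply, Complex.add_re, Complex.mul_re]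
        ring
      linarith [e ▸ h]
    have hq2 : ∀ x : ℝ, 0 ≤ (1 + τ - lam2 + lam3) * (x*x) + (2*s)*x + (1 + τ + lam2 - lam3) := by
      intro x
      have h := hPSD.re_dotProduct_nonneg (fun p => (!![(x:ℂ), 1; 1, x] p.1 p.2 : ℂ))
      have e : (RCLike.re (star (fun p => (!![(x:ℂ), 1; 1, x] p.1 p.2 : ℂ)) ⬝ᵥ
          M *ᵥ (fun p => (!![(x:ℂ), 1; 1, x] p.1 p.2 : ℂ))) : ℝ)
          = (1 + τ - lam2 + lam3) * (x*x) + (2*s)*x + (1 + τ + lam2 - lam3) := by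
        simp [hM, Matrix.mulVec, dotProduct, Fintype.sum_prod_type, Fin.sum_univ_two,
          σ1, σ2, σ3, Matrix.one_apply, Complex.add_re, Complex.mul_re]
        ring
      linarith [e ▸ h]
    have hd1 := discrim_le_zero hq1
    have hd2 := discrim_le_zero hq2
    rw [discrim] at hd1 hd2
    have r1 : (1 - τ + lam2 + lam3) * (1 - τ - lam2 - lam3)
        = (1-τ)^2 - (lam2+lam3)^2 := by ring
    have r2 : (1 + τ - lam2 + lam3) * (1 + τ + lam2 - lam3)
        = (1+τ)^2 - (lam2-lam3)^2 := by ring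
    constructor
    · nlinarith [hd1, r1]
    · nlinarith [hd2, r2]
  · -- inequalities → PSD
    rintro ⟨h1, h2⟩
    have hsq1 : (lam2-lam3)^2 ≤ (1+τ)^2 := by linarith [sq_nonneg s]
    have hsq1' : (lam3-lam2)^2 ≤ (1+τ)^2 := by
      have : (lam3-lam2)^2 = (lam2-lam3)^2 := by ring
      linarith
    have hsq2 : (lam2+lam3)^2 ≤ (1-τ)^2 := by linarith [sq_nonneg s]
    have hsq2' : (-(lam2+lam3))^2 ≤ (1-τ)^2 := by
      have : (-(lam2+lam3))^2 = (lam2+lam3)^2 := by ring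
      linarith
    have hA : 0 ≤ 1 + τ - lam2 + lam3 := by
      have := stmt9_abs (1+τ) (lam2-lam3) (by linarith) hsq1; linarith
    have hB : 0 ≤ 1 + τ + lam2 - lam3 := by
      have := stmt9_abs (1+τ) (lam3-lam2) (by linarith) hsq1'; linarith
    have hC : 0 ≤ 1 - τ + lam2 + lam3 := by
      have := stmt9_abs (1-τ) (-(lam2+lam3)) (by linarith) hsq2'; linarith
    have hE : 0 ≤ 1 - τ - lam2 - lam3 := by
      have := stmt9_abs (1-τ) (lam2+lam3) (by linarith) hsq2; linarith
    have hsAB : s^2 ≤ (1 + τ - lam2 + lam3) * (1 + τ + lam2 - lam3) := by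
      have : (1 + τ - lam2 + lam3) * (1 + τ + lam2 - lam3)
          = (1+τ)^2 - (lam2-lam3)^2 := by ring
      linarith
    have hsCE : (-s)^2 ≤ (1 - τ + lam2 + lam3) * (1 - τ - lam2 - lam3) := by
      have e3 : (1 - τ + lam2 + lam3) * (1 - τ - lam2 - lam3)
          = (1-τ)^2 - (lam2+lam3)^2 := by ring
      have e4 : (-s)^2 = s^2 := by ring
      linarith
    refine Matrix.PosSemidef.of_dotProduct_mulVec_nonneg ?_ ?_
    · -- Hermitian
      rw [Matrix.IsHermitian]
      ext ⟨i, j⟩ ⟨k, l⟩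
      fin_cases i <;> fin_cases j <;> fin_cases k <;> fin_cases l <;>
        simp [hM, σ1, σ2, σ3, Matrix.conjTranspose_apply, Matrix.one_apply, Complex.ext_iff,
          Prod.ext_iff, Fin.ext_iff]
    · intro v
      have h : star v ⬝ᵥ M *ᵥ v
          = (((1+lam3)/2)*((v 0).re*(v 0).re+(v 0).im*(v 0).im+(v 1).re*(v 1).re+(v 1).im*(v 1).im)
            + ((1-lam3)/2)*((v (0,1)).re*(v (0,1)).re+(v (0,1)).im*(v (0,1)).im
                +(v (1,0)).re*(v (1,0)).re+(v (1,0)).im*(v (1,0)).im)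
            + s*(((v 0).re*(v (1,0)).re+(v 0).im*(v (1,0)).im)
                +((v (0,1)).re*(v 1).re+(v (0,1)).im*(v 1).im))
            + τ*(((v 0).re*(v 1).re+(v 0).im*(v 1).im)
                +((v (0,1)).re*(v (1,0)).re+(v (0,1)).im*(v (1,0)).im))
            + lam2*(((v (0,1)).re*(v (1,0)).re+(v (0,1)).im*(v (1,0)).im)
                -((v 0).re*(v 1).re+(v 0).im*(v 1).im)) : ℝ) := by
        apply Complex.ext
        · simp [hM, Matrix.mulVec, dotProduct, Fintype.sum_prod_type, Fin.sum_univ_two,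
            σ1, σ2, σ3, Matrix.one_apply, Complex.add_re, Complex.mul_re, Prod.mk_zero_zero, Prod.mk_one_one]
          ring
        · simp [hM, Matrix.mulVec, dotProduct, Fintype.sum_prod_type, Fin.sum_univ_two,
            σ1, σ2, σ3, Matrix.one_apply, Complex.add_im, Complex.mul_im, Prod.mk_zero_zero, Prod.mk_one_one]
          ring
      rw [h, Complex.zero_le_real]
      clear h
      clear_value M
      clear hM M
      generalize (v 0).re = a1; generalize (v 0).im = a2
      generalize (v (0,1)).re = b1; generalize (v (0,1)).im = b2
      generalize (v (1,0)).re = c1; generalize (v (1,0)).im = c2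
      generalize (v 1).re = d1; generalize (v 1).im = d2
      clear v
      have k1 := stmt9_key (1 + τ - lam2 + lam3) (1 + τ + lam2 - lam3) s
        ((a1+d1)^2+(a2+d2)^2) ((b1+c1)^2+(b2+c2)^2) ((a1+d1)*(b1+c1)+(a2+d2)*(b2+c2))
        hA hB hsAB (by positivity) (by positivity) (stmt9_cauchy _ _ _ _)
      have k2 := stmt9_key (1 - τ + lam2 + lam3) (1 - τ - lam2 - lam3) (-s)
        ((a1-d1)^2+(a2-d2)^2) ((b1-c1)^2+(b2-c2)^2) ((a1-d1)*(b1-c1)+(a2-d2)*(b2-c2))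
        hC hE hsCE (by positivity) (by positivity) (stmt9_cauchy _ _ _ _)
      have hexp : ((1+lam3)/2)*(a1*a1+a2*a2+d1*d1+d2*d2)
            + ((1-lam3)/2)*(b1*b1+b2*b2+c1*c1+c2*c2)
            + s*((a1*c1+a2*c2)+(b1*d1+b2*d2))
            + τ*((a1*d1+a2*d2)+(b1*c1+b2*c2))
            + lam2*((b1*c1+b2*c2)-(a1*d1+a2*d2))
          = (((1 + τ - lam2 + lam3)*((a1+d1)^2+(a2+d2)^2)
              + (1 + τ + lam2 - lam3)*((b1+c1)^2+(b2+c2)^2)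
              + 2*s*((a1+d1)*(b1+c1)+(a2+d2)*(b2+c2)))
            + ((1 - τ + lam2 + lam3)*((a1-d1)^2+(a2-d2)^2)
              + (1 - τ - lam2 - lam3)*((b1-c1)^2+(b2-c2)^2)
              + 2*(-s)*((a1-d1)*(b1-c1)+(a2-d2)*(b2-c2)))) / 4 := by ring
      linarith [k1, k2, hexp]
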